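/- Let X and Y be real Banach spaces and N an absolute normalized norm on ℝ² that is positively octahedral: there exist a, b ≥ 0 with N(a,b) = 1, N((a,b)+(0,1)) = 2 and N((a,b)+(1,0)) = 2 (hence N((a,b)+(c,d)) = 2 for all c,d ≥ 0 with N(c,d)=1). If x ∈ S_X is a Daugavet point of X and y ∈ S_Y is a Daugavet point of Y, then (a·x, b·y) is a Daugavet point of Z = X ⊕_N Y. -/

import Mathlib

section Aux

variable (N : ℝ × ℝ → ℝ)

private lemma aux_zero (Nhom : ∀ (t : ℝ) (u : ℝ × ℝ), N (t • u) = |t| * N u) :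
    N 0 = 0 := by simpa using Nhom 0 0

private lemma aux_nonneg (Ntri : ∀ u v : ℝ × ℝ, N (u + v) ≤ N u + N v)
    (Nhom : ∀ (t : ℝ) (u : ℝ × ℝ), N (t • u) = |t| * N u) (u : ℝ × ℝ) : 0 ≤ N u := by
  have h1 : N (-u) = N u := by
    rw [show -u = (-1 : ℝ) • u by simp, Nhom]; simp
  have h2 := Ntri u (-u)
  rw [show u + -u = 0 from by abel, aux_zero N Nhom, h1] at h2
  linarith

private lemma aux_mono1 (Ntri : ∀ u v : ℝ × ℝ, N (u + v) ≤ N u + N v)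
    (Nhom : ∀ (t : ℝ) (u : ℝ × ℝ), N (t • u) = |t| * N u)
    (Nabs : ∀ s t : ℝ, N (s, t) = N (|s|, |t|))
    (s s' t : ℝ) (hs : 0 ≤ s) (hss' : s ≤ s') : N (s, t) ≤ N (s', t) := by
  rcases eq_or_lt_of_le (hs.trans hss') with h | h
  · have hs0 : s = 0 := le_antisymm (hss'.trans h.ge) hs
    rw [hs0, ← h]
  · set l := (s' + s) / (2 * s') with hl
    have h0l : 0 ≤ l := by positivity
    have h1l : l ≤ 1 := by
      rw [hl, div_le_one (by linarith)]; linarith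
    have key : ((s, t) : ℝ × ℝ) = l • ((s', t) : ℝ × ℝ) + (1 - l) • ((-s', t) : ℝ × ℝ) := by
      simp only [Prod.smul_mk, smul_eq_mul, Prod.mk_add_mk, Prod.mk.injEq]
      constructor
      · rw [hl]; field_simp; ring
      · ring
    have habs : N (-s', t) = N (s', t) := by
      rw [Nabs (-s') t, abs_neg, ← Nabs]
    calc N (s, t) = N (l • ((s', t) : ℝ × ℝ) + (1 - l) • ((-s', t) : ℝ × ℝ)) := by rw [← key]
      _ ≤ N (l • ((s', t) : ℝ × ℝ)) + N ((1 - l) • ((-s', t) : ℝ × ℝ)) := Ntri _ _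
      _ = l * N (s', t) + (1 - l) * N (s', t) := by
          rw [Nhom, Nhom, abs_of_nonneg h0l, abs_of_nonneg (by linarith), habs]
      _ = N (s', t) := by ring

private lemma aux_mono2 (Ntri : ∀ u v : ℝ × ℝ, N (u + v) ≤ N u + N v)
    (Nhom : ∀ (t : ℝ) (u : ℝ × ℝ), N (t • u) = |t| * N u)
    (Nabs : ∀ s t : ℝ, N (s, t) = N (|s|, |t|))
    (s t t' : ℝ) (ht : 0 ≤ t) (htt' : t ≤ t') : N (s, t) ≤ N (s, t') := by
  rcases eq_or_lt_of_le (ht.trans htt') with h | h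
  · have ht0 : t = 0 := le_antisymm (htt'.trans h.ge) ht
    rw [ht0, ← h]
  · set l := (t' + t) / (2 * t') with hl
    have h0l : 0 ≤ l := by positivity
    have h1l : l ≤ 1 := by
      rw [hl, div_le_one (by linarith)]; linarith
    have key : ((s, t) : ℝ × ℝ) = l • ((s, t') : ℝ × ℝ) + (1 - l) • ((s, -t') : ℝ × ℝ) := by
      simp only [Prod.smul_mk, smul_eq_mul, Prod.mk_add_mk, Prod.mk.injEq]
      constructor
      · ring
      · rw [hl]; field_simp; ring
    have habs : N (s, -t') = N (s, t') := by
      rw [Nabs s (-t'), abs_neg, ← Nabs]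
    calc N (s, t) = N (l • ((s, t') : ℝ × ℝ) + (1 - l) • ((s, -t') : ℝ × ℝ)) := by rw [← key]
      _ ≤ N (l • ((s, t') : ℝ × ℝ)) + N ((1 - l) • ((s, -t') : ℝ × ℝ)) := Ntri _ _
      _ = l * N (s, t') + (1 - l) * N (s, t') := by
          rw [Nhom, Nhom, abs_of_nonneg h0l, abs_of_nonneg (by linarith), habs]
      _ = N (s, t') := by ring

private lemma aux_mono (Ntri : ∀ u v : ℝ × ℝ, N (u + v) ≤ N u + N v)
    (Nhom : ∀ (t : ℝ) (u : ℝ × ℝ), N (t • u) = |t| * N u)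
    (Nabs : ∀ s t : ℝ, N (s, t) = N (|s|, |t|))
    (s s' t t' : ℝ) (hs : 0 ≤ s) (hss' : s ≤ s') (ht : 0 ≤ t) (htt' : t ≤ t') :
    N (s, t) ≤ N (s', t') :=
  (aux_mono1 N Ntri Nhom Nabs s s' t hs hss').trans
    (aux_mono2 N Ntri Nhom Nabs s' t t' ht htt')

/-- If `p`, `q` are in the unit ball and `N (p + q) = 2`, the whole segment
`[p, q]` lies on the unit sphere. -/
private lemma aux_seg (Ntri : ∀ u v : ℝ × ℝ, N (u + v) ≤ N u + N v)
    (Nhom : ∀ (t : ℝ) (u : ℝ × ℝ), N (t • u) = |t| * N u)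
    (p q : ℝ × ℝ) (hp : N p ≤ 1) (hq : N q ≤ 1) (hpq : N (p + q) = 2)
    (t : ℝ) (ht0 : 0 ≤ t) (ht1 : t ≤ 1) : N (t • p + (1 - t) • q) = 1 := by
  have hnp := aux_nonneg N Ntri Nhom p
  have hnq := aux_nonneg N Ntri Nhom q
  have hle : N (t • p + (1 - t) • q) ≤ 1 := by
    calc N (t • p + (1 - t) • q) ≤ N (t • p) + N ((1 - t) • q) := Ntri _ _
      _ = t * N p + (1 - t) * N q := by
          rw [Nhom, Nhom, abs_of_nonneg ht0, abs_of_nonneg (by linarith)]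
      _ ≤ 1 := by nlinarith
  have hge : 1 ≤ N (t • p + (1 - t) • q) := by
    rcases le_total t (1 / 2) with h | h
    · have key : (1 - t) • (p + q) = (t • p + (1 - t) • q) + (1 - 2 * t) • p := by
        module
      have h1 := Ntri (t • p + (1 - t) • q) ((1 - 2 * t) • p)
      rw [← key, Nhom, Nhom, abs_of_nonneg (by linarith : (0:ℝ) ≤ 1 - t),
        abs_of_nonneg (by linarith : (0:ℝ) ≤ 1 - 2 * t), hpq] at h1
      nlinarith
    · have key : t • (p + q) = (t • p + (1 - t) • q) + (2 * t - 1) • q := by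
        module
      have h1 := Ntri (t • p + (1 - t) • q) ((2 * t - 1) • q)
      rw [← key, Nhom, Nhom, abs_of_nonneg (by linarith : (0:ℝ) ≤ t),
        abs_of_nonneg (by linarith : (0:ℝ) ≤ 2 * t - 1), hpq] at h1
      nlinarith
  linarith

private lemma aux_octa_half (Ntri : ∀ u v : ℝ × ℝ, N (u + v) ≤ N u + N v)
    (Nhom : ∀ (t : ℝ) (u : ℝ × ℝ), N (t • u) = |t| * N u)
    (Nabs : ∀ s t : ℝ, N (s, t) = N (|s|, |t|))
    (Nnorm₁ : N (1, 0) = 1)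
    (a b : ℝ) (ha : 0 ≤ a) (hb : 0 ≤ b) (hab : N (a, b) = 1)
    (hoct₂ : N ((a, b) + (1, 0)) = 2)
    (c d : ℝ) (hc : 0 ≤ c) (hd : 0 ≤ d) (hcd : N (c, d) = 1)
    (hord : a * d ≤ b * c) : N ((a, b) + (c, d)) = 2 := by
  have hsc : ∀ s : ℝ, 0 ≤ s → N (s, 0) = s := by
    intro s hs
    rw [show ((s, 0) : ℝ × ℝ) = s • ((1, 0) : ℝ × ℝ) by simp, Nhom,
      abs_of_nonneg hs, Nnorm₁, mul_one]
  have ha1 : a ≤ 1 := by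
    have h := aux_mono2 N Ntri Nhom Nabs a 0 b le_rfl hb
    rw [hsc a ha, hab] at h; exact h
  have hN00 : N (0, 0) = 0 := by
    rw [show ((0, 0) : ℝ × ℝ) = (0 : ℝ × ℝ) from rfl]; exact aux_zero N Nhom
  by_cases hb0 : b = 0
  · subst hb0
    have ha' : a = 1 := by rw [← hsc a ha, hab]
    have hd' : d = 0 := le_antisymm (by nlinarith) hd
    subst hd'
    have hc' : c = 1 := by rw [← hsc c hc, hcd]
    subst ha'; subst hc'
    have : ((1, 0) : ℝ × ℝ) + (1, 0) = (2 : ℝ) • ((1, 0) : ℝ × ℝ) := by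
      simp only [Prod.smul_mk, smul_eq_mul, Prod.mk_add_mk]; norm_num
    rw [this, Nhom, Nnorm₁]
    norm_num
  · have hbpos : 0 < b := lt_of_le_of_ne hb (Ne.symm hb0)
    set α := c + d * (1 - a) / b with hα
    have hq : 0 ≤ d * (1 - a) / b := div_nonneg (mul_nonneg hd (by linarith)) hb
    have hαnn : 0 ≤ α := by rw [hα]; linarith
    have hαpos : 0 < α := by
      rcases lt_or_eq_of_le hαnn with h | h
      · exact h
      · exfalso
        have h0 : (0 : ℝ) = c + d * (1 - a) / b := h.trans hα
        have hc0 : c = 0 := by linarith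
        have hq0 : d * (1 - a) / b = 0 := by linarith
        have hda' : d * (1 - a) = 0 := by
          rcases div_eq_zero_iff.1 hq0 with h1 | h1
          · exact h1
          · exact absurd h1 hb0
        rcases mul_eq_zero.1 hda' with h1 | h1
        · rw [hc0, h1, hN00] at hcd; norm_num at hcd
        · have haa : a = 1 := by linarith
          have hd0' : d = 0 := le_antisymm (by nlinarith) hd
          rw [hc0, hd0', hN00] at hcd; norm_num at hcd
    set t := d / (b * α) with ht
    have ht0 : 0 ≤ t := div_nonneg hd (by positivity)
    have hbα : b * α = b * c + d * (1 - a) := by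
      rw [hα]; field_simp
    have ht1 : t ≤ 1 := by
      rw [ht, div_le_one (by positivity)]
      rw [hbα]; nlinarith
    have hαne : α ≠ 0 := hαpos.ne'
    have hαt : α * t = d / b := by
      rw [ht]; field_simp
    have hrep : ((c, d) : ℝ × ℝ) = α • (t • ((a, b) : ℝ × ℝ) + (1 - t) • ((1, 0) : ℝ × ℝ)) := by
      simp only [Prod.smul_mk, smul_eq_mul, Prod.mk_add_mk, Prod.mk.injEq]
      constructor
      · have hh : α * (t * a + (1 - t) * 1) = (α * t) * (a - 1) + α := by ring
        rw [hh, hαt, hα]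
        field_simp
        ring
      · have hh : α * (t * b + (1 - t) * 0) = (α * t) * b := by ring
        rw [hh, hαt]
        field_simp
    have hseg : N (t • ((a, b) : ℝ × ℝ) + (1 - t) • ((1, 0) : ℝ × ℝ)) = 1 :=
      aux_seg N Ntri Nhom _ _ hab.le Nnorm₁.le hoct₂ t ht0 ht1
    have hα1 : α = 1 := by
      have h := hcd
      rw [hrep, Nhom, abs_of_nonneg hαnn, hseg, mul_one] at h
      exact h
    have hrep' : ((c, d) : ℝ × ℝ) = t • ((a, b) : ℝ × ℝ) + (1 - t) • ((1, 0) : ℝ × ℝ) := by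
      rw [hrep, hα1, one_smul]
    have hmid : ((a, b) : ℝ × ℝ) + (c, d) =
        (2 : ℝ) • (((1 + t) / 2) • ((a, b) : ℝ × ℝ) + (1 - (1 + t) / 2) • ((1, 0) : ℝ × ℝ)) := by
      rw [hrep']; module
    rw [hmid, Nhom, abs_of_nonneg (by norm_num : (0:ℝ) ≤ 2),
      aux_seg N Ntri Nhom _ _ hab.le Nnorm₁.le hoct₂ ((1 + t) / 2) (by linarith) (by linarith)]
    norm_num

private lemma aux_octa (Ntri : ∀ u v : ℝ × ℝ, N (u + v) ≤ N u + N v)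
    (Nhom : ∀ (t : ℝ) (u : ℝ × ℝ), N (t • u) = |t| * N u)
    (Nabs : ∀ s t : ℝ, N (s, t) = N (|s|, |t|))
    (Nnorm₁ : N (1, 0) = 1) (Nnorm₂ : N (0, 1) = 1)
    (a b : ℝ) (ha : 0 ≤ a) (hb : 0 ≤ b) (hab : N (a, b) = 1)
    (hoct₁ : N ((a, b) + (0, 1)) = 2) (hoct₂ : N ((a, b) + (1, 0)) = 2)
    (c d : ℝ) (hc : 0 ≤ c) (hd : 0 ≤ d) (hcd : N (c, d) = 1) :
    N ((a, b) + (c, d)) = 2 := by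
  rcases le_total (a * d) (b * c) with h | h
  · exact aux_octa_half N Ntri Nhom Nabs Nnorm₁ a b ha hb hab hoct₂ c d hc hd hcd h
  · have key := aux_octa_half (fun p => N (p.2, p.1))
      (fun u v => by simpa [Prod.mk_add_mk] using Ntri (u.2, u.1) (v.2, v.1))
      (fun s u => by simpa [Prod.smul_mk, smul_eq_mul] using Nhom s (u.2, u.1))
      (fun s t => Nabs t s) Nnorm₂
      b a hb ha hab (by simpa [Prod.mk_add_mk] using hoct₁)
      d c hd hc hcd (by linarith)
    simpa [Prod.mk_add_mk] using key

private lemma aux_normLower {E : Type*} [NormedAddCommGroup E] [NormedSpace ℝ E]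
    (x w : E) (hx : ‖x‖ = 1) (hw : ‖w‖ ≤ 1) (a c δ : ℝ)
    (ha : 0 ≤ a) (ha1 : a ≤ 1) (hc : 0 ≤ c) (hc1 : c ≤ 1) (hδ : 0 ≤ δ)
    (hxw : 2 - δ ≤ ‖x - w‖) : a + c - δ ≤ ‖a • x - c • w‖ := by
  rcases le_total a c with h | h
  · have key : a • x - c • w = c • (x - w) - (c - a) • x := by module
    have h1 : ‖c • (x - w)‖ - ‖(c - a) • x‖ ≤ ‖a • x - c • w‖ := by
      rw [key]; exact norm_sub_norm_le _ _
    rw [norm_smul, norm_smul, hx, Real.norm_eq_abs, Real.norm_eq_abs,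
      abs_of_nonneg hc, abs_of_nonneg (by linarith : (0:ℝ) ≤ c - a), mul_one] at h1
    have h2 : c * (2 - δ) ≤ c * ‖x - w‖ := mul_le_mul_of_nonneg_left hxw hc
    nlinarith [mul_nonneg (show (0:ℝ) ≤ 1 - c by linarith) hδ]
  · have key : a • x - c • w = a • (x - w) - (c - a) • w := by module
    have h1 : ‖a • (x - w)‖ - ‖(c - a) • w‖ ≤ ‖a • x - c • w‖ := by
      rw [key]; exact norm_sub_norm_le _ _
    rw [norm_smul, norm_smul, Real.norm_eq_abs, Real.norm_eq_abs,
      abs_of_nonneg ha, abs_of_nonpos (by linarith : c - a ≤ (0:ℝ))] at h1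
    have h2 : a * (2 - δ) ≤ a * ‖x - w‖ := mul_le_mul_of_nonneg_left hxw ha
    have h3 : -(c - a) * ‖w‖ ≤ -(c - a) * 1 := mul_le_mul_of_nonneg_left hw (by linarith)
    nlinarith [mul_nonneg (show (0:ℝ) ≤ 1 - a by linarith) hδ]

end Aux

set_option maxHeartbeats 4000000 in
/-- If `N` is an absolute normalized norm on `ℝ²` that is positively octahedral
(witnessed by `(a, b)`), `x` is a Daugavet point of `X` and `y` is a Daugavet
point of `Y`, then `(a•x, b•y)` is a Daugavet point of `Z = X ⊕_N Y`.
Here `Z` is any Banach space linearly identified with `X × Y` whose norm is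
`‖(x, y)‖ = N(‖x‖, ‖y‖)`. -/
theorem stmt_13 {X Y Z : Type*}
    [NormedAddCommGroup X] [NormedSpace ℝ X] [CompleteSpace X]
    [NormedAddCommGroup Y] [NormedSpace ℝ Y] [CompleteSpace Y]
    [NormedAddCommGroup Z] [NormedSpace ℝ Z] [CompleteSpace Z]
    (N : ℝ × ℝ → ℝ)
    -- `N` is a norm on `ℝ²`:
    (Ntri : ∀ u v : ℝ × ℝ, N (u + v) ≤ N u + N v)
    (Nhom : ∀ (t : ℝ) (u : ℝ × ℝ), N (t • u) = |t| * N u)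
    (Ndef : ∀ u : ℝ × ℝ, N u = 0 → u = 0)
    -- `N` is absolute and normalized:
    (Nabs : ∀ s t : ℝ, N (s, t) = N (|s|, |t|))
    (Nnorm₁ : N (1, 0) = 1) (Nnorm₂ : N (0, 1) = 1)
    -- `Z = X ⊕_N Y`:
    (e : Z ≃ₗ[ℝ] X × Y)
    (he : ∀ z : Z, ‖z‖ = N (‖(e z).1‖, ‖(e z).2‖))
    -- `N` is positively octahedral, witnessed by `(a, b)`:
    (a b : ℝ) (ha : 0 ≤ a) (hb : 0 ≤ b) (hab : N (a, b) = 1)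
    (hoct₁ : N ((a, b) + (0, 1)) = 2) (hoct₂ : N ((a, b) + (1, 0)) = 2)
    -- `x` and `y` are Daugavet points:
    (x : X) (hx : ‖x‖ = 1)
    (hxD : ∀ ε > (0 : ℝ),
      Metric.closedBall (0 : X) 1 =
        closure (convexHull ℝ {w : X | ‖w‖ ≤ 1 ∧ 2 - ε ≤ ‖x - w‖}))
    (y : Y) (hy : ‖y‖ = 1)
    (hyD : ∀ ε > (0 : ℝ),
      Metric.closedBall (0 : Y) 1 =
        closure (convexHull ℝ {w : Y | ‖w‖ ≤ 1 ∧ 2 - ε ≤ ‖y - w‖})) :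
    ‖e.symm (a • x, b • y)‖ = 1 ∧
    ∀ ε > (0 : ℝ),
      Metric.closedBall (0 : Z) 1 =
        closure (convexHull ℝ
          {w : Z | ‖w‖ ≤ 1 ∧ 2 - ε ≤ ‖e.symm (a • x, b • y) - w‖}) := by
  have hesymm : ∀ p : X × Y, ‖(e.symm p : Z)‖ = N (‖p.1‖, ‖p.2‖) := by
    intro p
    rw [he, e.apply_symm_apply]
  have hsc1 : ∀ s : ℝ, 0 ≤ s → N (s, 0) = s := by
    intro s hs
    rw [show ((s, 0) : ℝ × ℝ) = s • ((1, 0) : ℝ × ℝ) by simp, Nhom,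
      abs_of_nonneg hs, Nnorm₁, mul_one]
  have hsc2 : ∀ s : ℝ, 0 ≤ s → N (0, s) = s := by
    intro s hs
    rw [show ((0, s) : ℝ × ℝ) = s • ((0, 1) : ℝ × ℝ) by simp, Nhom,
      abs_of_nonneg hs, Nnorm₂, mul_one]
  have hmono := aux_mono N Ntri Nhom Nabs
  have ha1 : a ≤ 1 := by
    have h := hmono a a 0 b ha le_rfl le_rfl hb
    rw [hsc1 a ha, hab] at h; exact h
  have hb1 : b ≤ 1 := by
    have h := hmono 0 a b b le_rfl ha hb le_rfl
    rw [hsc2 b hb, hab] at h; exact h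
  have hNl1 : ∀ s t : ℝ, 0 ≤ s → 0 ≤ t → N (s, t) ≤ s + t := by
    intro s t hs ht
    calc N (s, t) = N ((s, 0) + (0, t)) := by norm_num
      _ ≤ N (s, 0) + N (0, t) := Ntri _ _
      _ = s + t := by rw [hsc1 s hs, hsc2 t ht]
  have hN11u : N (1, 1) ≤ 2 := by
    have := hNl1 1 1 zero_le_one zero_le_one; linarith
  have hN11l : 1 ≤ N (1, 1) := by
    have h := hmono 1 1 0 1 zero_le_one le_rfl le_rfl zero_le_one
    rw [hsc1 1 zero_le_one] at h; exact h
  have hz0norm : ‖(e.symm (a • x, b • y) : Z)‖ = 1 := by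
    rw [hesymm]
    show N (‖a • x‖, ‖b • y‖) = 1
    rw [norm_smul, norm_smul, hx, hy, Real.norm_eq_abs, Real.norm_eq_abs,
      abs_of_nonneg ha, abs_of_nonneg hb, mul_one, mul_one, hab]
  refine ⟨hz0norm, ?_⟩
  intro ε hε
  set z₀ : Z := e.symm (a • x, b • y) with hz₀
  clear_value z₀
  set δ : ℝ := ε / 2 with hδdef
  have hδpos : 0 < δ := by positivity
  set Dx := {w : X | ‖w‖ ≤ 1 ∧ 2 - δ ≤ ‖x - w‖} with hDxdef
  set Dy := {w : Y | ‖w‖ ≤ 1 ∧ 2 - δ ≤ ‖y - w‖} with hDydef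
  have hBx := hxD δ hδpos
  have hBy := hyD δ hδpos
  apply Set.Subset.antisymm
  · -- hard inclusion
    intro z hz
    rw [Metric.mem_closedBall, dist_zero_right] at hz
    have huv : N (‖(e z).1‖, ‖(e z).2‖) ≤ 1 := by rw [← he]; exact hz
    -- find (c, d) on the unit sphere dominating (‖u‖, ‖v‖)
    set f : ℝ → ℝ := fun t => N (‖(e z).1‖ + t, ‖(e z).2‖ + t) with hf
    have hlipN : ∀ u v : ℝ × ℝ, |N u - N v| ≤ N (u - v) := by
      intro u v
      rw [abs_le]
      constructor
      · have h1 := Ntri (v - u) u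
        have h2 : N (v - u) = N (u - v) := by
          rw [show v - u = (-1 : ℝ) • (u - v) by module, Nhom]; norm_num
        rw [show v - u + u = v by abel] at h1
        linarith
      · have h1 := Ntri (u - v) v
        rw [show u - v + v = u by abel] at h1
        linarith
    have hlip : LipschitzWith 2 f := by
      apply LipschitzWith.of_dist_le_mul
      intro s t
      rw [Real.dist_eq, Real.dist_eq]
      have h1 := hlipN (‖(e z).1‖ + s, ‖(e z).2‖ + s) (‖(e z).1‖ + t, ‖(e z).2‖ + t)
      have h2 : ((‖(e z).1‖ + s, ‖(e z).2‖ + s) : ℝ × ℝ) - (‖(e z).1‖ + t, ‖(e z).2‖ + t)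
          = (s - t) • ((1, 1) : ℝ × ℝ) := by
        simp only [Prod.mk_sub_mk, Prod.smul_mk, smul_eq_mul, Prod.mk.injEq]
        constructor <;> ring
      rw [h2, Nhom] at h1
      have : |s - t| * N (1, 1) ≤ 2 * |s - t| := by
        nlinarith [abs_nonneg (s - t)]
      calc |f s - f t| ≤ |s - t| * N (1, 1) := h1
        _ ≤ 2 * |s - t| := this
    have hivt := intermediate_value_Icc (by norm_num : (0:ℝ) ≤ 2) hlip.continuous.continuousOn
    have h1mem : (1 : ℝ) ∈ Set.Icc (f 0) (f 2) := by
      constructor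
      · show f 0 ≤ 1
        have : f 0 = N (‖(e z).1‖, ‖(e z).2‖) := by rw [hf]; norm_num
        rw [this]; exact huv
      · show 1 ≤ f 2
        have h := hmono 1 (‖(e z).1‖ + 2) 1 (‖(e z).2‖ + 2) zero_le_one
          (by linarith [norm_nonneg (e z).1]) zero_le_one (by linarith [norm_nonneg (e z).2])
        calc (1:ℝ) ≤ N (1, 1) := hN11l
          _ ≤ f 2 := h
    obtain ⟨t, htmem, hft⟩ := hivt h1mem
    set c : ℝ := ‖(e z).1‖ + t with hcdef
    set d : ℝ := ‖(e z).2‖ + t with hddef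
    have ht0 : 0 ≤ t := htmem.1
    have hcu : ‖(e z).1‖ ≤ c := by rw [hcdef]; linarith
    have hdv : ‖(e z).2‖ ≤ d := by rw [hddef]; linarith
    have hc0 : 0 ≤ c := le_trans (norm_nonneg _) hcu
    have hd0 : 0 ≤ d := le_trans (norm_nonneg _) hdv
    have hcd1 : N (c, d) = 1 := hft
    have hc1 : c ≤ 1 := by
      have h := hmono c c 0 d hc0 le_rfl le_rfl hd0
      rw [hsc1 c hc0, hcd1] at h; exact h
    have hd1 : d ≤ 1 := by
      have h := hmono 0 c d d le_rfl hc0 hd0 le_rfl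
      rw [hsc2 d hd0, hcd1] at h; exact h
    have hNac : N (a + c, b + d) = 2 := by
      have := aux_octa N Ntri Nhom Nabs Nnorm₁ Nnorm₂ a b ha hb hab hoct₁ hoct₂
        c d hc0 hd0 hcd1
      simpa [Prod.mk_add_mk] using this
    clear_value c d
    -- the continuous linear map (w, w') ↦ e.symm (c • w, d • w')
    set T : (X × Y) →ₗ[ℝ] Z :=
      e.symm.toLinearMap.comp
        (LinearMap.prodMap (c • LinearMap.id) (d • LinearMap.id)) with hT
    have hTapp : ∀ p : X × Y, T p = e.symm (c • p.1, d • p.2) := by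
      intro p; rfl
    have hTbound : ∀ p : X × Y, ‖T p‖ ≤ 2 * ‖p‖ := by
      intro p
      rw [hTapp, hesymm]
      calc N (‖c • p.1‖, ‖d • p.2‖) ≤ ‖c • p.1‖ + ‖d • p.2‖ :=
            hNl1 _ _ (norm_nonneg _) (norm_nonneg _)
        _ ≤ 2 * ‖p‖ := by
            rw [norm_smul, norm_smul, Real.norm_eq_abs, Real.norm_eq_abs,
              abs_of_nonneg hc0, abs_of_nonneg hd0]
            have hp1 := norm_fst_le p
            have hp2 := norm_snd_le p
            have h1 : c * ‖p.1‖ ≤ 1 * ‖p‖ :=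
              mul_le_mul hc1 hp1 (norm_nonneg _) zero_le_one
            have h2 : d * ‖p.2‖ ≤ 1 * ‖p‖ :=
              mul_le_mul hd1 hp2 (norm_nonneg _) zero_le_one
            linarith
    set L : (X × Y) →L[ℝ] Z := LinearMap.mkContinuous T 2 hTbound with hL
    have hLapp : ∀ p : X × Y, L p = e.symm (c • p.1, d • p.2) := by
      intro p; exact hTapp p
    clear_value T L
    -- image of Dx ×ˢ Dy lands in the Daugavet set of z₀
    have himg : (fun p : X × Y => L p) '' (Dx ×ˢ Dy) ⊆
        {w : Z | ‖w‖ ≤ 1 ∧ 2 - ε ≤ ‖z₀ - w‖} := by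
      rintro _ ⟨⟨w, w'⟩, hmemp, rfl⟩
      obtain ⟨hw1, hw2⟩ : w ∈ Dx := hmemp.1
      obtain ⟨hw'1, hw'2⟩ : w' ∈ Dy := hmemp.2
      show ‖L (w, w')‖ ≤ 1 ∧ 2 - ε ≤ ‖z₀ - L (w, w')‖
      rw [hLapp]
      constructor
      · rw [hesymm]
        show N (‖c • w‖, ‖d • w'‖) ≤ 1
        have hcw : ‖c • w‖ ≤ c := by
          rw [norm_smul, Real.norm_eq_abs, abs_of_nonneg hc0]
          nlinarith
        have hdw : ‖d • w'‖ ≤ d := by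
          rw [norm_smul, Real.norm_eq_abs, abs_of_nonneg hd0]
          nlinarith
        calc N (‖c • w‖, ‖d • w'‖) ≤ N (c, d) :=
              hmono _ _ _ _ (norm_nonneg _) hcw (norm_nonneg _) hdw
          _ = 1 := hcd1
      · have hdiff : z₀ - e.symm (c • w, d • w') = e.symm (a • x - c • w, b • y - d • w') := by
          rw [hz₀, ← map_sub]
          rfl
        rw [hdiff, hesymm]
        show 2 - ε ≤ N (‖a • x - c • w‖, ‖b • y - d • w'‖)
        have hs₁l : a + c - δ ≤ ‖a • x - c • w‖ :=
          aux_normLower x w hx hw1 a c δ ha ha1 hc0 hc1 hδpos.le hw2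
        have hs₂l : b + d - δ ≤ ‖b • y - d • w'‖ :=
          aux_normLower y w' hy hw'1 b d δ hb hb1 hd0 hd1 hδpos.le hw'2
        have hs₁u : ‖a • x - c • w‖ ≤ a + c := by
          calc ‖a • x - c • w‖ ≤ ‖a • x‖ + ‖c • w‖ := norm_sub_le _ _
            _ ≤ a + c := by
                rw [norm_smul, norm_smul, Real.norm_eq_abs, Real.norm_eq_abs,
                  abs_of_nonneg ha, abs_of_nonneg hc0, hx, mul_one]
                nlinarith
        have hs₂u : ‖b • y - d • w'‖ ≤ b + d := by
          calc ‖b • y - d • w'‖ ≤ ‖b • y‖ + ‖d • w'‖ := norm_sub_le _ _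
            _ ≤ b + d := by
                rw [norm_smul, norm_smul, Real.norm_eq_abs, Real.norm_eq_abs,
                  abs_of_nonneg hb, abs_of_nonneg hd0, hy, mul_one]
                nlinarith
        have htri : N (a + c, b + d) ≤ N (‖a • x - c • w‖, ‖b • y - d • w'‖)
            + N (a + c - ‖a • x - c • w‖, b + d - ‖b • y - d • w'‖) := by
          have heq : ((a + c, b + d) : ℝ × ℝ) =
              (‖a • x - c • w‖, ‖b • y - d • w'‖)
              + (a + c - ‖a • x - c • w‖, b + d - ‖b • y - d • w'‖) := by
            simp only [Prod.mk_add_mk, Prod.mk.injEq]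
            constructor <;> ring
          rw [heq]
          exact Ntri _ _
        have hsmall : N (a + c - ‖a • x - c • w‖, b + d - ‖b • y - d • w'‖) ≤ ε := by
          rw [Nabs]
          have h1 : |a + c - ‖a • x - c • w‖| ≤ δ := abs_le.2 ⟨by linarith, by linarith⟩
          have h2 : |b + d - ‖b • y - d • w'‖| ≤ δ := abs_le.2 ⟨by linarith, by linarith⟩
          have hδδ : ((δ, δ) : ℝ × ℝ) = δ • ((1, 1) : ℝ × ℝ) := by
            simp only [Prod.smul_mk, smul_eq_mul, mul_one]
          calc N (|a + c - ‖a • x - c • w‖|, |b + d - ‖b • y - d • w'‖|) ≤ N (δ, δ) :=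
                hmono _ _ _ _ (abs_nonneg _) h1 (abs_nonneg _) h2
            _ ≤ ε := by
                rw [hδδ, Nhom, abs_of_nonneg hδpos.le]
                rw [hδdef]
                nlinarith
        linarith [htri, hsmall, hNac]
    -- write z as L of a point of the product of closed hulls
    set p₁ : X := c⁻¹ • (e z).1 with hp₁def
    set p₂ : Y := d⁻¹ • (e z).2 with hp₂def
    have hcp₁ : c • p₁ = (e z).1 := by
      by_cases h0 : c = 0
      · have hu0 : (e z).1 = 0 := by
          exact norm_le_zero_iff.1 (hcu.trans (le_of_eq h0))
        rw [hp₁def, hu0]; simp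
      · rw [hp₁def, smul_smul, mul_inv_cancel₀ h0, one_smul]
    have hdp₂ : d • p₂ = (e z).2 := by
      by_cases h0 : d = 0
      · have hv0 : (e z).2 = 0 := by
          exact norm_le_zero_iff.1 (hdv.trans (le_of_eq h0))
        rw [hp₂def, hv0]; simp
      · rw [hp₂def, smul_smul, mul_inv_cancel₀ h0, one_smul]
    have hp₁ball : ‖p₁‖ ≤ 1 := by
      by_cases h0 : c = 0
      · rw [hp₁def, h0]; simp
      · have hcpos : 0 < c := lt_of_le_of_ne hc0 (Ne.symm h0)
        rw [hp₁def, norm_smul, Real.norm_eq_abs, abs_of_nonneg (inv_nonneg.2 hc0)]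
        calc c⁻¹ * ‖(e z).1‖ ≤ c⁻¹ * c :=
              mul_le_mul_of_nonneg_left hcu (inv_nonneg.2 hc0)
          _ = 1 := inv_mul_cancel₀ h0
    have hp₂ball : ‖p₂‖ ≤ 1 := by
      by_cases h0 : d = 0
      · rw [hp₂def, h0]; simp
      · rw [hp₂def, norm_smul, Real.norm_eq_abs, abs_of_nonneg (inv_nonneg.2 hd0)]
        calc d⁻¹ * ‖(e z).2‖ ≤ d⁻¹ * d :=
              mul_le_mul_of_nonneg_left hdv (inv_nonneg.2 hd0)
          _ = 1 := inv_mul_cancel₀ h0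
    have hp₁mem : p₁ ∈ closure (convexHull ℝ Dx) := by
      rw [← hBx]
      exact Metric.mem_closedBall.2 (by rw [dist_zero_right]; exact hp₁ball)
    have hp₂mem : p₂ ∈ closure (convexHull ℝ Dy) := by
      rw [← hBy]
      exact Metric.mem_closedBall.2 (by rw [dist_zero_right]; exact hp₂ball)
    have hzL : z = L (p₁, p₂) := by
      rw [hLapp]
      show z = e.symm (c • p₁, d • p₂)
      rw [hcp₁, hdp₂]
      exact (e.symm_apply_apply z).symm
    have hmem2 : ((p₁, p₂) : X × Y) ∈ closure (convexHull ℝ (Dx ×ˢ Dy)) := by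
      rw [convexHull_prod, closure_prod_eq]
      exact ⟨hp₁mem, hp₂mem⟩
    have hstep1 : (fun p : X × Y => L p) '' closure (convexHull ℝ (Dx ×ˢ Dy)) ⊆
        closure ((fun p : X × Y => L p) '' convexHull ℝ (Dx ×ˢ Dy)) :=
      image_closure_subset_closure_image L.continuous
    have hstep2 : (fun p : X × Y => L p) '' convexHull ℝ (Dx ×ˢ Dy) =
        convexHull ℝ ((fun p : X × Y => L p) '' (Dx ×ˢ Dy)) := by
      have : (fun p : X × Y => L p) = (T : X × Y → Z) := by
        funext p; exact (hLapp p).trans (hTapp p).symm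
      rw [this]
      exact T.image_convexHull _
    have : z ∈ closure (convexHull ℝ ((fun p : X × Y => L p) '' (Dx ×ˢ Dy))) := by
      rw [hzL]
      have h1 : L (p₁, p₂) ∈ (fun p : X × Y => L p) '' closure (convexHull ℝ (Dx ×ˢ Dy)) :=
        Set.mem_image_of_mem _ hmem2
      have h2 := hstep1 h1
      rwa [hstep2] at h2
    exact closure_mono (convexHull_mono himg) this
  · -- easy inclusion
    apply closure_minimal
    · apply convexHull_min
      · intro w hw
        rw [Metric.mem_closedBall, dist_zero_right]
        exact hw.1
      · exact convex_closedBall _ _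
    · exact Metric.isClosed_closedBall
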